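/- arXiv:1304.7391 — 3 statements merged into one kernel-verified Lean document; each statement's English description precedes it below -/
import Mathlib

section
/- If G ≤ Sym(Ω) is λ-homogeneous and intransitive, where λ is a partition of n other than (1,1,…,1), then λ is uniform, i.e., all parts of λ are equal. -/
def IsOrdPartition {n r : ℕ} (lam : Fin r → ℕ) (P : Fin r → Finset (Fin n)) : Prop :=
  (∀ i, (P i).card = lam i) ∧ ∀ x : Fin n, ∃! i, x ∈ P i

def IsLambdaTransitive {n r : ℕ} (G : Subgroup (Equiv.Perm (Fin n))) (lam : Fin r → ℕ) : Prop :=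
  ∀ P Q : Fin r → Finset (Fin n), IsOrdPartition lam P → IsOrdPartition lam Q →
    ∃ g ∈ G, ∀ i, (P i).image ⇑g = Q i

def IsLambdaHomogeneous {n r : ℕ} (G : Subgroup (Equiv.Perm (Fin n))) (lam : Fin r → ℕ) : Prop :=
  ∀ P Q : Fin r → Finset (Fin n), IsOrdPartition lam P → IsOrdPartition lam Q →
    ∃ g ∈ G, (Set.range fun i => (P i).image ⇑g) = Set.range Q

def IsTHomogeneous {n : ℕ} (G : Subgroup (Equiv.Perm (Fin n))) (t : ℕ) : Prop :=
  ∀ A B : Finset (Fin n), A.card = t → B.card = t → ∃ g ∈ G, A.image ⇑g = B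

-- helper: partition a finset into blocks of prescribed sizes
lemma part_aux {n r : ℕ} (lam : Fin r → ℕ) (I : Finset (Fin r)) :
    ∀ s : Finset (Fin n), ∑ i ∈ I, lam i = s.card →
    ∃ P : Fin r → Finset (Fin n), (∀ i ∈ I, (P i).card = lam i) ∧ (∀ i ∈ I, P i ⊆ s) ∧
      (∀ x ∈ s, ∃! i, i ∈ I ∧ x ∈ P i) := by
  induction I using Finset.induction_on with
  | empty =>
      intro s hs
      simp only [Finset.sum_empty] at hs
      have hsE : s = ∅ := Finset.card_eq_zero.1 hs.symm
      subst hsE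
      exact ⟨fun _ => ∅, by simp, by simp, by simp⟩
  | @insert i I hiI ih =>
      intro s hs
      rw [Finset.sum_insert hiI] at hs
      have h1 : lam i ≤ s.card := by omega
      obtain ⟨B, hBs, hBc⟩ := s.exists_subset_card_eq h1
      have h2 : ∑ j ∈ I, lam j = (s \ B).card := by
        rw [Finset.card_sdiff_of_subset hBs, hBc]; omega
      obtain ⟨P', hc', hs', hu'⟩ := ih (s \ B) h2
      refine ⟨Function.update P' i B, ?_, ?_, ?_⟩
      · intro j hj
        rcases Finset.mem_insert.1 hj with rfl | hj
        · simp [hBc]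
        · rw [Function.update_of_ne (ne_of_mem_of_not_mem hj hiI)]; exact hc' j hj
      · intro j hj
        rcases Finset.mem_insert.1 hj with rfl | hj
        · simpa using hBs
        · rw [Function.update_of_ne (ne_of_mem_of_not_mem hj hiI)]
          exact (hs' j hj).trans (Finset.sdiff_subset)
      · intro x hx
        by_cases hxB : x ∈ B
        · refine ⟨i, ⟨Finset.mem_insert_self i I, by simp [hxB]⟩, ?_⟩
          rintro k ⟨hk, hxk⟩
          rcases Finset.mem_insert.1 hk with rfl | hk
          · rfl
          · exfalso
            rw [Function.update_of_ne (ne_of_mem_of_not_mem hk hiI)] at hxk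
            exact (Finset.mem_sdiff.1 (hs' k hk hxk)).2 hxB
        · have hx' : x ∈ s \ B := Finset.mem_sdiff.2 ⟨hx, hxB⟩
          obtain ⟨k, ⟨hkI, hxk⟩, hun⟩ := hu' x hx'
          have hki : k ≠ i := ne_of_mem_of_not_mem hkI hiI
          refine ⟨k, ⟨Finset.mem_insert_of_mem hkI, by rw [Function.update_of_ne hki]; exact hxk⟩, ?_⟩
          rintro m ⟨hm, hxm⟩
          rcases Finset.mem_insert.1 hm with rfl | hm
          · exfalso; rw [Function.update_self] at hxm; exact hxB hxm
          · exact hun m ⟨hm, by rwa [Function.update_of_ne (ne_of_mem_of_not_mem hm hiI)] at hxm⟩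

-- helper: a t-set with prescribed intersection size with O
lemma exists_card_inter {n : ℕ} (O : Finset (Fin n)) (t s : ℕ)
    (h1 : s ≤ O.card) (h2 : t - s ≤ n - O.card) (h3 : s ≤ t) :
    ∃ A : Finset (Fin n), A.card = t ∧ (A ∩ O).card = s := by
  obtain ⟨S, hSO, hSc⟩ := O.exists_subset_card_eq h1
  have hOc : (Oᶜ : Finset (Fin n)).card = n - O.card := by
    rw [Finset.card_compl, Fintype.card_fin]
  obtain ⟨T, hTO, hTc⟩ := (Oᶜ : Finset (Fin n)).exists_subset_card_eq (n := t - s) (by omega)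
  have hd : Disjoint S T := by
    refine Finset.disjoint_left.2 fun x hxS hxT => ?_
    exact (Finset.mem_compl.1 (hTO hxT)) (hSO hxS)
  refine ⟨S ∪ T, ?_, ?_⟩
  · rw [Finset.card_union_of_disjoint hd, hSc, hTc]; omega
  · have : (S ∪ T) ∩ O = S := by
      rw [Finset.union_inter_distrib_right]
      have h1' : S ∩ O = S := Finset.inter_eq_left.2 hSO
      have h2' : T ∩ O = ∅ := by
        refine Finset.eq_empty_of_forall_notMem fun x hx => ?_
        obtain ⟨hxT, hxO⟩ := Finset.mem_inter.1 hx
        exact (Finset.mem_compl.1 (hTO hxT)) hxO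
      rw [h1', h2', Finset.union_empty]
    rw [this, hSc]

lemma thom_trans {n : ℕ} (G : Subgroup (Equiv.Perm (Fin n))) (t : ℕ) (ht0 : 0 < t) (htn : t < n)
    (h : IsTHomogeneous G t) : ∀ x y : Fin n, ∃ g ∈ G, g x = y := by
  classical
  by_contra hc
  push_neg at hc
  obtain ⟨x, y, hxy⟩ := hc
  set O : Finset (Fin n) := Finset.univ.filter (fun z => ∃ g ∈ G, g x = z) with hOdef
  have hmem : ∀ z, z ∈ O ↔ ∃ g ∈ G, g x = z := by intro z; simp [hOdef]
  have hx : x ∈ O := (hmem x).2 ⟨1, G.one_mem, rfl⟩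
  have hy : y ∉ O := by rw [hmem]; push_neg; exact hxy
  have hO1 : 1 ≤ O.card := Finset.card_pos.2 ⟨x, hx⟩
  have hOn : O.card < n := by
    have hne : O ≠ Finset.univ := fun h => hy (h ▸ Finset.mem_univ y)
    have := Finset.card_lt_card (Finset.ssubset_univ_iff.2 hne)
    simpa using this
  have hstab : ∀ g ∈ G, O.image ⇑g = O := by
    intro g hg
    have hsub : O.image ⇑g ⊆ O := by
      intro z hz
      obtain ⟨w, hw, rfl⟩ := Finset.mem_image.1 hz
      obtain ⟨k, hk, rfl⟩ := (hmem w).1 hw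
      exact (hmem _).2 ⟨g * k, G.mul_mem hg hk, rfl⟩
    exact Finset.eq_of_subset_of_card_le hsub
      (le_of_eq (Finset.card_image_of_injective O g.injective).symm)
  obtain ⟨A, hAc, hAi⟩ := exists_card_inter O t (min t O.card) (by omega) (by omega) (by omega)
  obtain ⟨B, hBc, hBi⟩ := exists_card_inter O t (t - (n - O.card)) (by omega) (by omega) (by omega)
  obtain ⟨g, hg, hgAB⟩ := h A B hAc hBc
  have key : (A ∩ O).image ⇑g = B ∩ O := by
    rw [Finset.image_inter A O g.injective, hgAB, hstab g hg]
  have : (A ∩ O).card = (B ∩ O).card := by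
    rw [← key, Finset.card_image_of_injective _ g.injective]
  omega

theorem stmt_7 {n r : ℕ} (G : Subgroup (Equiv.Perm (Fin n))) (lam : Fin r → ℕ)
    (hpos : ∀ i, 0 < lam i) (hsum : ∑ i, lam i = n)
    (hlam : ∃ i, lam i ≠ 1)
    (h : IsLambdaHomogeneous G lam)
    (hintrans : ¬ ∀ x y : Fin n, ∃ g ∈ G, g x = y) :
    ∀ i j, lam i = lam j := by
  by_contra hc
  push_neg at hc
  obtain ⟨i1, j1, hne⟩ := hc
  obtain ⟨i0, -, hmin⟩ := Finset.exists_min_image Finset.univ lam ⟨i1, Finset.mem_univ i1⟩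
  set a := lam i0 with ha
  set S : Finset (Fin r) := Finset.univ.filter (fun i => lam i = a) with hSdef
  have hSmem : ∀ i, i ∈ S ↔ lam i = a := by intro i; simp [hSdef]
  have hja : ∃ j, lam j ≠ a := by
    by_cases h1 : lam i1 = a
    · exact ⟨j1, fun hh => hne (h1.trans hh.symm)⟩
    · exact ⟨i1, h1⟩
  obtain ⟨j, hj⟩ := hja
  set T := ∑ i ∈ S, lam i with hT
  have hi0S : i0 ∈ S := (hSmem i0).2 rfl
  have hT0 : 0 < T :=
    lt_of_lt_of_le (hpos i0) (Finset.single_le_sum (fun i _ => Nat.zero_le _) hi0S)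
  have hsplit : T + ∑ i ∈ Sᶜ, lam i = n := by
    rw [hT, Finset.sum_add_sum_compl, hsum]
  have hjS : j ∈ Sᶜ := Finset.mem_compl.2 (fun hh => hj ((hSmem j).1 hh))
  have hjle : lam j ≤ ∑ i ∈ Sᶜ, lam i :=
    Finset.single_le_sum (fun i _ => Nat.zero_le _) hjS
  have hTn : T < n := by have := hpos j; omega
  have hthom : IsTHomogeneous G T := by
    intro A B hA hB
    have hcomp : ∀ C : Finset (Fin n), C.card = T → ∑ i ∈ Sᶜ, lam i = (Cᶜ : Finset (Fin n)).card := by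
      intro C hC
      rw [Finset.card_compl, Fintype.card_fin, hC]; omega
    obtain ⟨P1, hP1c, hP1s, hP1u⟩ := part_aux lam S A (by rw [hA])
    obtain ⟨P2, hP2c, hP2s, hP2u⟩ := part_aux lam Sᶜ (Aᶜ) (hcomp A hA)
    obtain ⟨Q1, hQ1c, hQ1s, hQ1u⟩ := part_aux lam S B (by rw [hB])
    obtain ⟨Q2, hQ2c, hQ2s, hQ2u⟩ := part_aux lam Sᶜ (Bᶜ) (hcomp B hB)
    set P : Fin r → Finset (Fin n) := fun i => if i ∈ S then P1 i else P2 i with hPdef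
    set Q : Fin r → Finset (Fin n) := fun i => if i ∈ S then Q1 i else Q2 i with hQdef
    have mkpart : ∀ (C : Finset (Fin n)) (R1 R2 : Fin r → Finset (Fin n)),
        (∀ i ∈ S, (R1 i).card = lam i) → (∀ i ∈ S, R1 i ⊆ C) →
        (∀ x ∈ C, ∃! i, i ∈ S ∧ x ∈ R1 i) →
        (∀ i ∈ Sᶜ, (R2 i).card = lam i) → (∀ i ∈ Sᶜ, R2 i ⊆ Cᶜ) →
        (∀ x ∈ (Cᶜ : Finset (Fin n)), ∃! i, i ∈ Sᶜ ∧ x ∈ R2 i) →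
        (∀ i, ((fun i => if i ∈ S then R1 i else R2 i) i).card = lam i) ∧
          ∀ x : Fin n, ∃! i, x ∈ (fun i => if i ∈ S then R1 i else R2 i) i := by
      intro C R1 R2 hc1 hs1 hu1 hc2 hs2 hu2
      constructor
      · intro i
        by_cases hiS : i ∈ S
        · simp only [hiS, if_pos]; exact hc1 i hiS
        · simp only [hiS, if_neg, ite_false]; exact hc2 i (Finset.mem_compl.2 hiS)
      · intro x
        by_cases hxC : x ∈ C
        · obtain ⟨i, ⟨hiS, hxi⟩, hun⟩ := hu1 x hxC
          refine ⟨i, by simp only [hiS, if_pos]; exact hxi, ?_⟩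
          intro k hk
          by_cases hkS : k ∈ S
          · simp only [hkS, if_pos] at hk; exact hun k ⟨hkS, hk⟩
          · simp only [hkS, if_neg, ite_false] at hk
            exact absurd hxC (Finset.mem_compl.1 (hs2 k (Finset.mem_compl.2 hkS) hk))
        · have hxC' : x ∈ (Cᶜ : Finset (Fin n)) := Finset.mem_compl.2 hxC
          obtain ⟨i, ⟨hiS, hxi⟩, hun⟩ := hu2 x hxC'
          have hiS' : i ∉ S := Finset.mem_compl.1 hiS
          refine ⟨i, by simp only [hiS', if_neg, ite_false]; exact hxi, ?_⟩
          intro k hk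
          by_cases hkS : k ∈ S
          · simp only [hkS, if_pos] at hk
            exact absurd (hs1 k hkS hk) (fun hh => hxC hh)
          · simp only [hkS, if_neg, ite_false] at hk
            exact hun k ⟨Finset.mem_compl.2 hkS, hk⟩
    have hP := mkpart A P1 P2 hP1c hP1s hP1u hP2c hP2s hP2u
    have hQ := mkpart B Q1 Q2 hQ1c hQ1s hQ1u hQ2c hQ2s hQ2u
    obtain ⟨g, hg, hrange⟩ := h P Q hP hQ
    refine ⟨g, hg, Finset.Subset.antisymm ?_ ?_⟩
    · intro z hz
      obtain ⟨w, hw, rfl⟩ := Finset.mem_image.1 hz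
      obtain ⟨i, ⟨hiS, hwi⟩, -⟩ := hP1u w hw
      have : (P i).image ⇑g ∈ Set.range Q := by
        rw [← hrange]; exact ⟨i, rfl⟩
      obtain ⟨k, hk0⟩ := this
      have hk : (P i).image ⇑g = Q k := hk0.symm
      have hPi : P i = P1 i := by simp only [hPdef, hiS, if_pos]
      have hcard : lam k = a := by
        have h1 : (Q k).card = lam k := (hQ.1 k)
        have h2 : ((P i).image ⇑g).card = lam i := by
          rw [Finset.card_image_of_injective _ g.injective]; exact hP.1 i
        rw [← hk, h2] at h1
        rw [← h1]; exact (hSmem i).1 hiS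
      have hkS : k ∈ S := (hSmem k).2 hcard
      have hQk : Q k = Q1 k := by simp only [hQdef, hkS, if_pos]
      have : g w ∈ Q k := by
        rw [← hk]; exact Finset.mem_image_of_mem _ (by rw [hPi]; exact hwi)
      rw [hQk] at this
      exact hQ1s k hkS this
    · intro z hz
      obtain ⟨k, ⟨hkS, hzk⟩, -⟩ := hQ1u z hz
      have hQk : Q k = Q1 k := by simp only [hQdef, hkS, if_pos]
      have : Q k ∈ Set.range fun i => (P i).image ⇑g := by
        rw [hrange]; exact ⟨k, rfl⟩
      obtain ⟨i, hi0⟩ := this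
      have hi : (P i).image ⇑g = Q k := hi0
      have hcard : lam i = a := by
        have h2 : ((P i).image ⇑g).card = lam i := by
          rw [Finset.card_image_of_injective _ g.injective]; exact hP.1 i
        rw [hi] at h2
        rw [hQ.1 k] at h2
        rw [← h2]; exact (hSmem k).1 hkS
      have hiS : i ∈ S := (hSmem i).2 hcard
      have hPi : P i = P1 i := by simp only [hPdef, hiS, if_pos]
      have hz' : z ∈ (P i).image ⇑g := by rw [hi, hQk]; exact hzk
      obtain ⟨w, hw, rfl⟩ := Finset.mem_image.1 hz'
      exact Finset.mem_image_of_mem _ (hP1s i hiS (by rwa [hPi] at hw))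
  exact hintrans (thom_trans G T hT0 hTn hthom)
end

section
/- If (a, G) is an Sₙ-pair, where a ∈ Tₙ \ Sₙ has kernel partition of type λ, then G is λ-homogeneous. -/
def permsIn {n : ℕ} (G : Subgroup (Equiv.Perm (Fin n))) : Set (Function.End (Fin n)) :=
  {f | ∃ g ∈ G, f = ⇑g}

/-- The submonoid of the full transformation monoid generated by `a` and the group `G`. -/
def genMonoid {n : ℕ} (a : Function.End (Fin n)) (G : Subgroup (Equiv.Perm (Fin n))) :
    Submonoid (Function.End (Fin n)) :=
  Submonoid.closure ({a} ∪ permsIn G)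

/-- `(a, G)` is an `Sₙ`-pair: the non-invertible parts of the monoids generated by
`{a} ∪ G` and by `{a} ∪ Sₙ` coincide. -/
def SnPair {n : ℕ} (a : Function.End (Fin n)) (G : Subgroup (Equiv.Perm (Fin n))) : Prop :=
  {x : Function.End (Fin n) | x ∈ genMonoid a G ∧ ¬ Function.Bijective x} =
  {x : Function.End (Fin n) | x ∈ genMonoid a ⊤ ∧ ¬ Function.Bijective x}

def rank {n : ℕ} (f : Function.End (Fin n)) : ℕ := (Finset.univ.image f).card

/-- The kernel partition of `a` has type `lam`: there is an ordered partition of type `lam`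
whose blocks are exactly the fibres of `a`. -/
def HasKernelType {n r : ℕ} (a : Function.End (Fin n)) (lam : Fin r → ℕ) : Prop :=
  ∃ P : Fin r → Finset (Fin n), IsOrdPartition lam P ∧
    ∀ i, ∀ x ∈ P i, ∀ y : Fin n, y ∈ P i ↔ a x = a y

section Aux

variable {n r : ℕ} {lam : Fin r → ℕ}

noncomputable def pidx {Q : Fin r → Finset (Fin n)} (hQ : IsOrdPartition lam Q)
    (x : Fin n) : Fin r := (hQ.2 x).choose

lemma pidx_mem {Q : Fin r → Finset (Fin n)} (hQ : IsOrdPartition lam Q) (x : Fin n) :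
    x ∈ Q (pidx hQ x) := (hQ.2 x).choose_spec.1

lemma pidx_eq {Q : Fin r → Finset (Fin n)} (hQ : IsOrdPartition lam Q) {x : Fin n}
    {i : Fin r} (hx : x ∈ Q i) : pidx hQ x = i :=
  ((hQ.2 x).choose_spec.2 i hx).symm

noncomputable def partEquiv {Q : Fin r → Finset (Fin n)} (hQ : IsOrdPartition lam Q) :
    Fin n ≃ Σ i, {x // x ∈ Q i} where
  toFun x := ⟨pidx hQ x, x, pidx_mem hQ x⟩
  invFun p := p.2.1
  left_inv x := rfl
  right_inv := by
    rintro ⟨i, x, hx⟩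
    have h : pidx hQ x = i := pidx_eq hQ hx
    subst h
    rfl

/-- There is a permutation mapping each block of `Q` onto the corresponding block of `P`. -/
lemma exists_perm_map {Q P : Fin r → Finset (Fin n)} (hQ : IsOrdPartition lam Q)
    (hP : IsOrdPartition lam P) :
    ∃ σ : Equiv.Perm (Fin n), ∀ i, (Q i).image ⇑σ = P i := by
  have hcard : ∀ i, (Q i).card = (P i).card := fun i => by rw [hQ.1, hP.1]
  let f : ∀ i, {x // x ∈ Q i} ≃ {x // x ∈ P i} := fun i => Finset.equivOfCardEq (hcard i)
  let σ : Equiv.Perm (Fin n) :=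
    (partEquiv hQ).trans ((Equiv.sigmaCongrRight f).trans (partEquiv hP).symm)
  refine ⟨σ, fun i => ?_⟩
  have hsub : (Q i).image ⇑σ ⊆ P i := by
    intro y hy
    rw [Finset.mem_image] at hy
    obtain ⟨x, hx, rfl⟩ := hy
    have h1 : pidx hQ x = i := pidx_eq hQ hx
    subst h1
    exact (f (pidx hQ x) ⟨x, pidx_mem hQ x⟩).2
  refine Finset.eq_of_subset_of_card_le hsub ?_
  rw [hP.1, Finset.card_image_of_injective _ σ.injective, hQ.1]

/-- A partition refining another partition with the same number of (nonempty) blocks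
has the same set of blocks. -/
lemma refine_eq (hpos : ∀ i, 0 < lam i) {R Q : Fin r → Finset (Fin n)}
    (hR : IsOrdPartition lam R) (hQ : IsOrdPartition lam Q)
    (hsub : ∀ i, ∃ j, R i ⊆ Q j) : Set.range R = Set.range Q := by
  choose φ hφ using hsub
  have hsurj : Function.Surjective φ := by
    intro j
    have hQne : (Q j).Nonempty := Finset.card_pos.mp (by rw [hQ.1 j]; exact hpos j)
    obtain ⟨x, hx⟩ := hQne
    obtain ⟨i, hi, -⟩ := hR.2 x
    exact ⟨i, ((hQ.2 x).unique (hφ i hi) hx)⟩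
  have hinj : Function.Injective φ := Finite.injective_iff_surjective.mpr hsurj
  have hblocks : ∀ i, R i = Q (φ i) := by
    intro i
    refine Finset.Subset.antisymm (hφ i) ?_
    intro x hx
    obtain ⟨i', hi', -⟩ := hR.2 x
    have : φ i' = φ i := (hQ.2 x).unique (hφ i' hi') hx
    have : i' = i := hinj this
    subst this
    exact hi'
  have : R = Q ∘ φ := funext hblocks
  rw [this, Set.range_comp, hsurj.range_eq, Set.image_univ]

def pe (g : Equiv.Perm (Fin n)) : Function.End (Fin n) := ⇑g

@[simp] lemma pe_apply (g : Equiv.Perm (Fin n)) (x : Fin n) : pe g x = g x := rfl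

lemma pe_mul (g h : Equiv.Perm (Fin n)) : pe (g * h) = pe g * pe h := rfl

lemma struct {a : Function.End (Fin n)} {G : Subgroup (Equiv.Perm (Fin n))} :
    ∀ x ∈ genMonoid a G, (∃ g ∈ G, x = pe g) ∨
      ∃ u ∈ genMonoid a G, ∃ g ∈ G, x = u * a * pe g := by
  intro x hx
  induction hx using Submonoid.closure_induction with
  | mem x hx =>
    rcases hx with hx | ⟨g, hg, rfl⟩
    · rcases hx with rfl
      right
      refine ⟨1, one_mem _, 1, one_mem _, ?_⟩
      funext y
      rfl
    · exact Or.inl ⟨g, hg, rfl⟩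
  | one => exact Or.inl ⟨1, one_mem _, rfl⟩
  | mul x y hx hy ihx ihy =>
    rcases ihy with ⟨g, hg, rfl⟩ | ⟨u, hu, g, hg, rfl⟩
    · rcases ihx with ⟨g', hg', rfl⟩ | ⟨u, hu, g', hg', rfl⟩
      · left
        exact ⟨g' * g, mul_mem hg' hg, by rw [pe_mul]⟩
      · right
        exact ⟨u, hu, g' * g, mul_mem hg' hg, by rw [pe_mul, ← mul_assoc]⟩
    · right
      exact ⟨x * u, mul_mem hx hu, g, hg, by simp [mul_assoc]⟩

end Aux

theorem stmt_12 {n r : ℕ} (a : Function.End (Fin n)) (G : Subgroup (Equiv.Perm (Fin n)))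
    (lam : Fin r → ℕ) (hpos : ∀ i, 0 < lam i)
    (ha : ¬ Function.Bijective a) (hker : HasKernelType a lam) (h : SnPair a G) :
    IsLambdaHomogeneous G lam := by
  obtain ⟨P, hP, hfib⟩ := hker
  -- Key claim: every partition of type lam can be carried onto P by some g ∈ G.
  have key : ∀ Q : Fin r → Finset (Fin n), IsOrdPartition lam Q →
      ∃ g ∈ G, (Set.range fun i => (Q i).image ⇑g) = Set.range P := by
    intro Q hQ
    obtain ⟨σ, hσ⟩ := exists_perm_map hQ hP
    set b : Function.End (Fin n) := a * pe σ with hb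
    have hbmem : b ∈ genMonoid a ⊤ := by
      exact mul_mem (Submonoid.subset_closure (Or.inl rfl))
        (Submonoid.subset_closure (Or.inr ⟨σ, Subgroup.mem_top σ, rfl⟩))
    have hbnotbij : ¬ Function.Bijective b := by
      intro hbij
      apply ha
      have heq : a = b * pe σ⁻¹ := by
        funext y
        show a y = b (σ⁻¹ y)
        show a y = a (σ (σ⁻¹ y))
        simp
      rw [heq]
      exact Function.Bijective.comp hbij (Equiv.bijective _)
    have hbG : b ∈ {x : Function.End (Fin n) | x ∈ genMonoid a G ∧ ¬ Function.Bijective x} := by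
      rw [h]
      exact ⟨hbmem, hbnotbij⟩
    obtain ⟨u, hu, g, hg, hbeq⟩ := (struct b hbG.1).resolve_left
      (by rintro ⟨g, hg, he⟩; exact hbG.2 (he ▸ Equiv.bijective g))
    -- R : the partition P pulled back by g
    set R : Fin r → Finset (Fin n) := fun i => (P i).image ⇑g⁻¹ with hR
    have hmemR : ∀ i x, x ∈ R i ↔ g x ∈ P i := by
      intro i x
      simp only [hR, Finset.mem_image]
      constructor
      · rintro ⟨y, hy, rfl⟩
        simpa using hy
      · intro hx
        exact ⟨g x, hx, by simp⟩
    have hRpart : IsOrdPartition lam R := by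
      constructor
      · intro i
        rw [hR]
        rw [Finset.card_image_of_injective _ (Equiv.injective _), hP.1]
      · intro x
        obtain ⟨i, hi, huniq⟩ := hP.2 (g x)
        exact ⟨i, (hmemR i x).mpr hi, fun j hj => huniq j ((hmemR j x).mp hj)⟩
    have hsub : ∀ i, ∃ j, R i ⊆ Q j := by
      intro i
      have hRne : (R i).Nonempty := Finset.card_pos.mp (by rw [hRpart.1 i]; exact hpos i)
      obtain ⟨x₀, hx₀⟩ := hRne
      refine ⟨pidx hQ x₀, ?_⟩
      intro y hy
      -- g x₀ and g y are in the same block P i, so a (g x₀) = a (g y), so b x₀ = b y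
      have h1 : a (g x₀) = a (g y) :=
        (hfib i (g x₀) ((hmemR i x₀).mp hx₀) (g y)).mp ((hmemR i y).mp hy)
      have h2 : b x₀ = b y := by
        rw [hbeq]
        show u (a (g x₀)) = u (a (g y))
        rw [h1]
      -- b z = a (σ z)
      have h3 : a (σ x₀) = a (σ y) := by
        have hbx : ∀ z, b z = a (σ z) := fun z => rfl
        rw [← hbx, ← hbx]
        exact h2
      -- σ x₀ ∈ P (pidx hQ x₀)
      have hσx₀ : σ x₀ ∈ P (pidx hQ x₀) := by
        rw [← hσ (pidx hQ x₀)]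
        exact Finset.mem_image_of_mem _ (pidx_mem hQ x₀)
      have hσy : σ y ∈ P (pidx hQ x₀) := (hfib _ (σ x₀) hσx₀ (σ y)).mpr h3
      rw [← hσ (pidx hQ x₀), Finset.mem_image] at hσy
      obtain ⟨z, hz, hzy⟩ := hσy
      rwa [← σ.injective hzy]
    have hrange : Set.range R = Set.range Q := refine_eq hpos hRpart hQ hsub
    refine ⟨g, hg, ?_⟩
    have himg : ∀ i, (R i).image ⇑g = P i := by
      intro i
      rw [hR, Finset.image_image]
      rw [show (⇑g ∘ ⇑g⁻¹) = id by ext z; simp]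
      exact Finset.image_id
    calc (Set.range fun i => (Q i).image ⇑g)
        = (Finset.image ⇑g) '' Set.range Q := by
          rw [← Set.range_comp]; rfl
      _ = (Finset.image ⇑g) '' Set.range R := by rw [hrange]
      _ = Set.range fun i => (R i).image ⇑g := by rw [← Set.range_comp]; rfl
      _ = Set.range P := by simp only [himg]
  intro P' Q' hP' hQ'
  obtain ⟨g₁, hg₁, hr₁⟩ := key P' hP'
  obtain ⟨g₂, hg₂, hr₂⟩ := key Q' hQ'
  refine ⟨g₂⁻¹ * g₁, mul_mem (inv_mem hg₂) hg₁, ?_⟩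
  have hcoe : ⇑(g₂⁻¹ * g₁) = ⇑g₂⁻¹ ∘ ⇑g₁ := by ext z; simp
  calc (Set.range fun i => (P' i).image ⇑(g₂⁻¹ * g₁))
      = Set.range fun i => ((P' i).image ⇑g₁).image ⇑g₂⁻¹ := by
        simp only [Finset.image_image, hcoe]
    _ = (Finset.image ⇑g₂⁻¹) '' Set.range (fun i => (P' i).image ⇑g₁) := by
        rw [← Set.range_comp]; rfl
    _ = (Finset.image ⇑g₂⁻¹) '' Set.range (fun i => (Q' i).image ⇑g₂) := by rw [hr₁, hr₂]
    _ = Set.range fun i => ((Q' i).image ⇑g₂).image ⇑g₂⁻¹ := by rw [← Set.range_comp]; rfl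
    _ = Set.range Q' := by
        have : (fun i => ((Q' i).image ⇑g₂).image ⇑g₂⁻¹) = Q' := by
          funext i
          rw [Finset.image_image, show (⇑g₂⁻¹ ∘ ⇑g₂) = id from by ext z; simp]
          exact Finset.image_id
        rw [this]
end

section
/- Let a ∈ Tₙ \ Sₙ and G ≤ Sₙ. Then ⟨a,G⟩ \ G = ⟨a,Sₙ⟩ \ Sₙ if and only if the set of elements of rank equal to rank(a) in ⟨a,G⟩ equals the set of elements of rank equal to rank(a) in ⟨a,Sₙ⟩. -/
/-- A permutation viewed as an endomorphism. -/
def toEnd {n : ℕ} (p : Equiv.Perm (Fin n)) : Function.End (Fin n) := ⇑p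

lemma toEnd_mul {n : ℕ} (p q : Equiv.Perm (Fin n)) : toEnd (p * q) = toEnd p * toEnd q := rfl

/-- The set of "sandwiched" elements `h ∘ a ∘ g` with `h, g` permutations. -/
def sandw {n : ℕ} (a : Function.End (Fin n)) : Set (Function.End (Fin n)) :=
  {x | ∃ h g : Equiv.Perm (Fin n), x = toEnd h * a * toEnd g}

lemma rank_bij {n : ℕ} {f : Function.End (Fin n)} (hf : Function.Bijective f) :
    rank f = n := by
  unfold rank
  rw [Finset.card_image_of_injective _ hf.1, Finset.card_univ, Fintype.card_fin]

lemma rank_lt {n : ℕ} {a : Function.End (Fin n)} (ha : ¬ Function.Bijective a) :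
    rank a < n := by
  have hle : rank a ≤ n := by
    unfold rank
    calc (Finset.univ.image a).card ≤ Finset.univ.card := Finset.card_image_le
    _ = n := by simp
  rcases lt_or_eq_of_le hle with h | h
  · exact h
  · exfalso
    apply ha
    have hsurj : Function.Surjective a := by
      have himg : (Finset.univ.image a) = Finset.univ := by
        apply Finset.eq_univ_of_card
        simpa [rank, Finset.card_univ] using h
      intro y
      have : y ∈ Finset.univ.image a := by rw [himg]; exact Finset.mem_univ y
      obtain ⟨b, _, hb⟩ := Finset.mem_image.mp this
      exact ⟨b, hb⟩
    exact Finite.surjective_iff_bijective.mp hsurj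

lemma rank_sandw {n : ℕ} (a : Function.End (Fin n)) {x : Function.End (Fin n)}
    (hx : x ∈ sandw a) : rank x = rank a := by
  obtain ⟨h, g, rfl⟩ := hx
  unfold rank
  have heq : (toEnd h * a * toEnd g : Function.End (Fin n)) = ⇑h ∘ a ∘ ⇑g := rfl
  rw [heq, show (⇑h ∘ a ∘ ⇑g) = (⇑h ∘ a) ∘ ⇑g from rfl, ← Finset.image_image,
    Finset.image_univ_equiv]
  show (Finset.univ.image ((⇑h : Fin n → Fin n) ∘ (fun i => a i))).card =
    (Finset.univ.image (fun i => a i)).card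
  rw [← Finset.image_image,
    Finset.card_image_of_injective _ h.injective]

lemma sandw_mem_top {n : ℕ} (a : Function.End (Fin n)) {x : Function.End (Fin n)}
    (hx : x ∈ sandw a) : x ∈ genMonoid a ⊤ := by
  obtain ⟨h, g, rfl⟩ := hx
  have hmem : ∀ p : Equiv.Perm (Fin n), toEnd p ∈ genMonoid a ⊤ := fun p =>
    Submonoid.subset_closure (Or.inr ⟨p, Subgroup.mem_top p, rfl⟩)
  exact mul_mem (mul_mem (hmem h) (Submonoid.subset_closure (Or.inl rfl))) (hmem g)

lemma absorb {n : ℕ} (a : Function.End (Fin n)) {x : Function.End (Fin n)}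
    (hx : x ∈ Subsemigroup.closure (sandw a)) (p : Equiv.Perm (Fin n)) :
    toEnd p * x ∈ Subsemigroup.closure (sandw a) ∧
      x * toEnd p ∈ Subsemigroup.closure (sandw a) := by
  induction hx using Subsemigroup.closure_induction with
  | mem y hy =>
    obtain ⟨h, g, rfl⟩ := hy
    constructor
    · have : toEnd p * (toEnd h * a * toEnd g) = toEnd (p * h) * a * toEnd g := by
        rw [toEnd_mul]; simp [mul_assoc]
      rw [this]
      exact Subsemigroup.subset_closure ⟨p * h, g, rfl⟩
    · have : (toEnd h * a * toEnd g) * toEnd p = toEnd h * a * toEnd (g * p) := by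
        rw [toEnd_mul]; simp [mul_assoc]
      rw [this]
      exact Subsemigroup.subset_closure ⟨h, g * p, rfl⟩
  | mul y z hy hz ihy ihz =>
    constructor
    · rw [← mul_assoc]
      exact mul_mem ihy.1 hz
    · rw [mul_assoc]
      exact mul_mem hy ihz.2

lemma decomp {n : ℕ} (a : Function.End (Fin n)) {x : Function.End (Fin n)}
    (hx : x ∈ genMonoid a ⊤) :
    Function.Bijective x ∨ x ∈ Subsemigroup.closure (sandw a) := by
  induction hx using Submonoid.closure_induction with
  | mem y hy =>
    rcases hy with hy | ⟨g, _, rfl⟩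
    · right
      rcases hy with rfl
      refine Subsemigroup.subset_closure ⟨1, 1, ?_⟩
      show y = id ∘ y ∘ id
      simp
      rfl
    · exact Or.inl g.bijective
  | one => exact Or.inl Function.bijective_id
  | mul y z hy hz ihy ihz =>
    rcases ihy with hy' | hy' <;> rcases ihz with hz' | hz'
    · exact Or.inl (hy'.comp hz')
    · have : y * z = toEnd (Equiv.ofBijective y hy') * z := rfl
      rw [this]
      exact Or.inr ((absorb a hz' (Equiv.ofBijective y hy')).1)
    · have : y * z = y * toEnd (Equiv.ofBijective z hz') := rfl
      rw [this]
      exact Or.inr ((absorb a hy' (Equiv.ofBijective z hz')).2)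
    · exact Or.inr (mul_mem hy' hz')

theorem stmt_14 {n : ℕ} (a : Function.End (Fin n)) (G : Subgroup (Equiv.Perm (Fin n)))
    (ha : ¬ Function.Bijective a) :
    SnPair a G ↔
      {x : Function.End (Fin n) | x ∈ genMonoid a G ∧ rank x = rank a} =
        {x : Function.End (Fin n) | x ∈ genMonoid a ⊤ ∧ rank x = rank a} := by
  have hlt := rank_lt ha
  have hnotbij : ∀ x : Function.End (Fin n), rank x = rank a → ¬ Function.Bijective x := by
    intro x hx hb
    rw [rank_bij hb] at hx
    omega
  have hGtop : (genMonoid a G : Set (Function.End (Fin n))) ⊆ genMonoid a ⊤ := by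
    apply Submonoid.closure_mono
    apply Set.union_subset_union_right
    rintro f ⟨g, _, rfl⟩
    exact ⟨g, Subgroup.mem_top g, rfl⟩
  constructor
  · intro hsn
    ext x
    simp only [Set.mem_setOf_eq]
    constructor
    · rintro ⟨hm, hr⟩
      have : x ∈ {x : Function.End (Fin n) | x ∈ genMonoid a ⊤ ∧ ¬ Function.Bijective x} :=
        hsn ▸ ⟨hm, hnotbij x hr⟩
      exact ⟨this.1, hr⟩
    · rintro ⟨hm, hr⟩
      have : x ∈ {x : Function.End (Fin n) | x ∈ genMonoid a G ∧ ¬ Function.Bijective x} :=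
        hsn.symm ▸ ⟨hm, hnotbij x hr⟩
      exact ⟨this.1, hr⟩
  · intro hrank
    ext x
    simp only [Set.mem_setOf_eq]
    constructor
    · rintro ⟨hm, hb⟩
      exact ⟨hGtop hm, hb⟩
    · rintro ⟨hm, hb⟩
      refine ⟨?_, hb⟩
      rcases decomp a hm with hb' | hcl
      · exact absurd hb' hb
      · have hsub : sandw a ⊆ (genMonoid a G : Set (Function.End (Fin n))) := by
          intro y hy
          have hmemset : y ∈ {x : Function.End (Fin n) | x ∈ genMonoid a ⊤ ∧ rank x = rank a} :=
            ⟨sandw_mem_top a hy, rank_sandw a hy⟩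
          rw [← hrank] at hmemset
          exact hmemset.1
        have hle : Subsemigroup.closure (sandw a) ≤ (genMonoid a G).toSubsemigroup :=
          Subsemigroup.closure_le.mpr hsub
        exact hle hcl
end
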